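/- arXiv:1211.4142 — 2 statements merged into one kernel-verified Lean document; each statement's English description precedes it below -/
import Mathlib

section
/- Minimum Deviation Trend Line theorem: Let A ∈ ℝ^{m×n}, μ = Ae/n, and C = A − μeᵀ with principal left singular vector u₁ and largest singular value σ₁. Then for all unit vectors x ∈ ℝ^m and all p ∈ ℝ^m, ‖(I − xxᵀ)(A − peᵀ)‖_F² ≥ ‖C‖_F² − σ₁², with equality attained at x = u₁, p = μ. -/
open Matrix BigOperators

private lemma mdtl_proj_entry {m n : ℕ} (x : Fin m → ℝ) (B : Matrix (Fin m) (Fin n) ℝ)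
    (i : Fin m) (j : Fin n) :
    (((1 : Matrix (Fin m) (Fin m) ℝ) - vecMulVec x x) * B) i j
      = B i j - x i * ∑ k, x k * B k j := by
  rw [Matrix.sub_mul, Matrix.one_mul, Matrix.sub_apply, Matrix.mul_apply]
  simp [vecMulVec_apply, Finset.mul_sum, mul_assoc]

private lemma mdtl_proj_norm {m n : ℕ} (x : Fin m → ℝ) (hx : ∑ i, x i ^ 2 = 1)
    (B : Matrix (Fin m) (Fin n) ℝ) :
    ∑ i, ∑ j, ((((1 : Matrix (Fin m) (Fin m) ℝ) - vecMulVec x x) * B) i j) ^ 2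
      = (∑ i, ∑ j, B i j ^ 2) - ∑ j, (∑ i, x i * B i j) ^ 2 := by
  rw [Finset.sum_comm]
  rw [show (∑ i, ∑ j, B i j ^ 2) = ∑ j, ∑ i, B i j ^ 2 from Finset.sum_comm]
  rw [← Finset.sum_sub_distrib]
  refine Finset.sum_congr rfl fun j _ => ?_
  simp_rw [mdtl_proj_entry]
  set s := ∑ k, x k * B k j with hs
  have expand : ∀ i : Fin m, (B i j - x i * s) ^ 2
      = B i j ^ 2 - (2 * s) * (x i * B i j) + s ^ 2 * x i ^ 2 := fun i => by ring
  simp_rw [expand]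
  rw [Finset.sum_add_distrib, Finset.sum_sub_distrib, ← Finset.mul_sum, ← Finset.mul_sum, hx, ← hs]
  ring

private lemma mdtl_dot_CCt {m n : ℕ} (C : Matrix (Fin m) (Fin n) ℝ) (x : Fin m → ℝ) :
    x ⬝ᵥ ((C * Cᵀ) *ᵥ x) = ∑ j, (∑ i, x i * C i j) ^ 2 := by
  rw [← mulVec_mulVec, dotProduct_mulVec, mulVec_transpose]
  simp [dotProduct, vecMul, sq]

/-- Minimum Deviation Trend Line: For all unit x and all p,
‖(I − xxᵀ)(A − peᵀ)‖_F² ≥ ‖C‖_F² − σ₁², with equality at x = u₁, p = μ. -/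
theorem minimum_deviation_trend_line
    {m n : ℕ} (hn : 0 < n) (A : Matrix (Fin m) (Fin n) ℝ)
    (e : Fin n → ℝ) (he : e = fun _ => (1 : ℝ))
    (μ : Fin m → ℝ) (hμ : μ = (n : ℝ)⁻¹ • (A *ᵥ e))
    (C : Matrix (Fin m) (Fin n) ℝ) (hC : C = A - vecMulVec μ e)
    (σ₁ : ℝ) (hσ₁ : 0 ≤ σ₁)
    (u₁ : Fin m → ℝ) (hu₁ : ∑ i, (u₁ i) ^ 2 = 1)
    (heig : (C * Cᵀ) *ᵥ u₁ = (σ₁ ^ 2) • u₁)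
    (hmax : ∀ lam : ℝ, (∃ v : Fin m → ℝ, v ≠ 0 ∧ (C * Cᵀ) *ᵥ v = lam • v) → lam ≤ σ₁ ^ 2) :
    (∀ (x : Fin m → ℝ), (∑ i, (x i) ^ 2 = 1) → ∀ p : Fin m → ℝ,
        (∑ i, ∑ j, (C i j) ^ 2) - σ₁ ^ 2
          ≤ ∑ i, ∑ j, ((((1 : Matrix (Fin m) (Fin m) ℝ) - vecMulVec x x) * (A - vecMulVec p e)) i j) ^ 2) ∧
      ∑ i, ∑ j, ((((1 : Matrix (Fin m) (Fin m) ℝ) - vecMulVec u₁ u₁) * (A - vecMulVec μ e)) i j) ^ 2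
        = (∑ i, ∑ j, (C i j) ^ 2) - σ₁ ^ 2 := by
  have hn' : (n : ℝ) ≠ 0 := Nat.cast_ne_zero.mpr hn.ne'
  -- row sums of C vanish
  have hrow : ∀ i, ∑ j, C i j = 0 := by
    intro i
    rw [hC]
    simp only [Matrix.sub_apply, vecMulVec_apply, he, mul_one, Finset.sum_sub_distrib,
      Finset.sum_const, Finset.card_univ, Fintype.card_fin, nsmul_eq_mul]
    rw [hμ]
    simp only [Pi.smul_apply, smul_eq_mul, mulVec, dotProduct, he, mul_one]
    field_simp
    ring
  -- Rayleigh quotient bound from hmax via the spectral theorem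
  have hray : ∀ x : Fin m → ℝ, (∑ i, x i ^ 2 = 1) →
      ∑ j, (∑ i, x i * C i j) ^ 2 ≤ σ₁ ^ 2 := by
    intro x hx
    have hM : (C * Cᵀ).IsHermitian := by
      rw [← conjTranspose_eq_transpose_of_trivial]
      exact isHermitian_mul_conjTranspose_self C
    have hN : ((σ₁ ^ 2) • (1 : Matrix (Fin m) (Fin m) ℝ) - C * Cᵀ).IsHermitian := by
      refine Matrix.IsHermitian.sub ?_ hM
      simp [Matrix.IsHermitian]
    have hev : ∀ i, 0 ≤ hN.eigenvalues i := by
      intro i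
      have hv := hN.mulVec_eigenvectorBasis i
      rw [Matrix.sub_mulVec, smul_mulVec, Matrix.one_mulVec] at hv
      have hv0 : ⇑(hN.eigenvectorBasis i) ≠ (0 : Fin m → ℝ) := by
        have := hN.eigenvectorBasis.orthonormal.ne_zero i
        intro h
        exact this (by ext k; exact congrFun h k)
      have hMv : (C * Cᵀ) *ᵥ ⇑(hN.eigenvectorBasis i)
          = (σ₁ ^ 2 - hN.eigenvalues i) • ⇑(hN.eigenvectorBasis i) := by
        rw [sub_smul, ← hv]
        abel
      have := hmax _ ⟨_, hv0, hMv⟩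
      linarith
    have hpsd : ((σ₁ ^ 2) • (1 : Matrix (Fin m) (Fin m) ℝ) - C * Cᵀ).PosSemidef :=
      hN.posSemidef_iff_eigenvalues_nonneg.mpr hev
    have h0 := hpsd.dotProduct_mulVec_nonneg x
    have hx1 : x ⬝ᵥ x = 1 := by
      simpa [dotProduct, sq] using hx
    have hexp : star x ⬝ᵥ (((σ₁ ^ 2) • (1 : Matrix (Fin m) (Fin m) ℝ) - C * Cᵀ) *ᵥ x)
        = σ₁ ^ 2 - ∑ j, (∑ i, x i * C i j) ^ 2 := by
      rw [show (star x : Fin m → ℝ) = x from rfl]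
      rw [Matrix.sub_mulVec, smul_mulVec, Matrix.one_mulVec, dotProduct_sub,
        dotProduct_smul, mdtl_dot_CCt, smul_eq_mul, hx1, mul_one]
    rw [hexp] at h0
    linarith
  -- the key exact formula
  have hB : ∀ p : Fin m → ℝ, ∀ i j, (A - vecMulVec p e) i j = C i j + (μ i - p i) := by
    intro p i j
    rw [hC]
    simp only [Matrix.sub_apply, vecMulVec_apply, he, mul_one]
    ring
  have key : ∀ x : Fin m → ℝ, (∑ i, x i ^ 2 = 1) → ∀ p : Fin m → ℝ,
      ∑ i, ∑ j, ((((1 : Matrix (Fin m) (Fin m) ℝ) - vecMulVec x x) * (A - vecMulVec p e)) i j) ^ 2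
        = ((∑ i, ∑ j, C i j ^ 2) - ∑ j, (∑ i, x i * C i j) ^ 2)
          + ((n : ℝ) * (∑ i, (μ i - p i) ^ 2) - (n : ℝ) * (∑ i, x i * (μ i - p i)) ^ 2) := by
    intro x hx p
    rw [mdtl_proj_norm x hx]
    simp_rw [hB p]
    have t1 : ∑ i, ∑ j, (C i j + (μ i - p i)) ^ 2
        = (∑ i, ∑ j, C i j ^ 2) + (n : ℝ) * ∑ i, (μ i - p i) ^ 2 := by
      have : ∀ i : Fin m, ∑ j, (C i j + (μ i - p i)) ^ 2
          = (∑ j, C i j ^ 2) + (n : ℝ) * (μ i - p i) ^ 2 := by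
        intro i
        have expand : ∀ j : Fin n, (C i j + (μ i - p i)) ^ 2
            = C i j ^ 2 + (2 * (μ i - p i)) * C i j + (μ i - p i) ^ 2 := fun j => by ring
        simp_rw [expand]
        rw [Finset.sum_add_distrib, Finset.sum_add_distrib, ← Finset.mul_sum, hrow i,
          Finset.sum_const, Finset.card_univ, Fintype.card_fin, nsmul_eq_mul]
        ring
      simp_rw [this]
      rw [Finset.sum_add_distrib, Finset.mul_sum]
    have t2 : ∑ j, (∑ i, x i * (C i j + (μ i - p i))) ^ 2
        = (∑ j, (∑ i, x i * C i j) ^ 2) + (n : ℝ) * (∑ i, x i * (μ i - p i)) ^ 2 := by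
      have hsum : ∀ j : Fin n, ∑ i, x i * (C i j + (μ i - p i))
          = (∑ i, x i * C i j) + ∑ i, x i * (μ i - p i) := by
        intro j
        rw [← Finset.sum_add_distrib]
        exact Finset.sum_congr rfl fun i _ => by ring
      simp_rw [hsum]
      set w := ∑ i, x i * (μ i - p i) with hw
      have expand : ∀ j : Fin n, ((∑ i, x i * C i j) + w) ^ 2
          = (∑ i, x i * C i j) ^ 2 + (2 * w) * (∑ i, x i * C i j) + w ^ 2 := fun j => by ring
      simp_rw [expand]
      have htzero : ∑ j, ∑ i, x i * C i j = 0 := by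
        rw [Finset.sum_comm]
        simp_rw [← Finset.mul_sum, hrow]
        simp
      rw [Finset.sum_add_distrib, Finset.sum_add_distrib, ← Finset.mul_sum, htzero,
        Finset.sum_const, Finset.card_univ, Fintype.card_fin, nsmul_eq_mul]
      ring
    rw [t1, t2]
    ring
  constructor
  · intro x hx p
    rw [key x hx p]
    have hcs : (∑ i, x i * (μ i - p i)) ^ 2 ≤ ∑ i, (μ i - p i) ^ 2 := by
      calc (∑ i, x i * (μ i - p i)) ^ 2
          ≤ (∑ i, x i ^ 2) * ∑ i, (μ i - p i) ^ 2 :=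
            Finset.sum_mul_sq_le_sq_mul_sq _ _ _
        _ = ∑ i, (μ i - p i) ^ 2 := by rw [hx, one_mul]
    have h1 := hray x hx
    have h2 : 0 ≤ (n : ℝ) := Nat.cast_nonneg n
    nlinarith [mul_le_mul_of_nonneg_left hcs h2]
  · rw [key u₁ hu₁ μ]
    have hdot : ∑ j, (∑ i, u₁ i * C i j) ^ 2 = σ₁ ^ 2 := by
      rw [← mdtl_dot_CCt, heig, dotProduct_smul, smul_eq_mul]
      have : u₁ ⬝ᵥ u₁ = 1 := by simpa [dotProduct, sq] using hu₁
      rw [this, mul_one]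
    rw [hdot]
    simp
end

section
/- The variance of the data projected onto the line {αx + p} equals ‖Cᵀx‖₂²/n: that is, ‖Â − μ_Âeᵀ‖_F²/n = ‖Cᵀx‖₂²/n, where Â = (I − xxᵀ)peᵀ + xxᵀA, μ_Â = Âe/n, and C = A − (Ae/n)eᵀ. In particular, the directional variance is independent of p. -/
open Matrix BigOperators

lemma directional_variance_entry
    {m n : ℕ} (A : Matrix (Fin m) (Fin n) ℝ)
    (x p : Fin m → ℝ) (hn' : (n:ℝ) ≠ 0) (i : Fin m) (j : Fin n) :
    ∑ k : Fin m, ((if i = k then 1 else 0) - x i * x k) * p k + ∑ k : Fin m, x i * x k * A k j -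
      ∑ l : Fin n,
        (↑n)⁻¹ *
          (∑ k : Fin m, ((if i = k then 1 else 0) - x i * x k) * p k + ∑ k : Fin m, x i * x k * A k l) =
    ∑ k : Fin m, x i * ((A k j - ∑ l : Fin n, (↑n)⁻¹ * A k l) * x k) := by
  simp only [sub_mul, ite_mul, one_mul, zero_mul, Finset.sum_ite_eq, Finset.mem_univ, if_true,
    Finset.sum_sub_distrib, mul_add, Finset.sum_add_distrib, Finset.sum_const, Finset.card_univ,
    Fintype.card_fin, nsmul_eq_mul, mul_sub, Finset.mul_sum, ← Finset.sum_mul]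
  rw [Finset.sum_comm (γ := Fin n) (f := fun l k => (↑n)⁻¹ * (x i * x k * A k l))]
  field_simp
  rw [add_sub_add_left_eq_sub]
  refine congrArg₂ (· - ·) (Finset.sum_congr rfl fun k _ => by ring) ?_
  refine Finset.sum_congr rfl fun k _ => ?_
  rw [show (x i * ∑ l : Fin n, A k l / (n:ℝ)) * x k = ∑ l : Fin n, x i * (A k l / (n:ℝ)) * x k by
    rw [Finset.mul_sum, Finset.sum_mul]]
  exact Finset.sum_congr rfl fun l _ => by ring

/-- The directional variance ‖Â − μ_Âeᵀ‖_F²/n equals ‖Cᵀx‖₂²/n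
(independent of p). -/
theorem directional_variance_eq
    {m n : ℕ} (hn : 0 < n) (A : Matrix (Fin m) (Fin n) ℝ)
    (x p : Fin m → ℝ) (hx : ∑ i, (x i) ^ 2 = 1)
    (e : Fin n → ℝ) (he : e = fun _ => (1 : ℝ))
    (μ : Fin m → ℝ) (hμ : μ = (n : ℝ)⁻¹ • (A *ᵥ e))
    (C : Matrix (Fin m) (Fin n) ℝ) (hC : C = A - vecMulVec μ e)
    (Ahat : Matrix (Fin m) (Fin n) ℝ)
    (hAhat : Ahat = (1 - vecMulVec x x) * vecMulVec p e + vecMulVec x x * A)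
    (μAhat : Fin m → ℝ) (hμAhat : μAhat = (n : ℝ)⁻¹ • (Ahat *ᵥ e)) :
    (∑ i, ∑ j, ((Ahat - vecMulVec μAhat e) i j) ^ 2) / n
      = (∑ j, ((Cᵀ *ᵥ x) j) ^ 2) / n := by
  have hn' : (n : ℝ) ≠ 0 := Nat.cast_ne_zero.mpr hn.ne'
  have key : ∀ i j, (Ahat - vecMulVec μAhat e) i j = x i * (Cᵀ *ᵥ x) j := by
    intro i j
    subst he hμ hC hAhat hμAhat
    simp only [Matrix.sub_apply, vecMulVec_apply, Matrix.add_apply, Matrix.mul_apply,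
      Matrix.sub_apply, Matrix.one_apply, mulVec, dotProduct, Pi.smul_apply, smul_eq_mul,
      transpose_apply, Finset.mul_sum, Finset.sum_mul, Finset.sum_sub_distrib,
      Finset.sum_ite_eq, Finset.mem_univ, if_true, mul_one]
    exact directional_variance_entry A x p hn' i j
  simp only [key, mul_pow, ← Finset.mul_sum]
  rw [← Finset.sum_mul, hx, one_mul]
end
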